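/- Let {p_w}_{w ∈ W} be a family of probability distributions over tuples (x, z, u, t, e) with values in finite sets, indexed by a finite set W, and suppose that the marginal p_w(x, u, e) = p(x, u, e) is independent of w. Let ACC be a set of pairs (x, u) with p(ACC) > 0 (conditioning on ACC means conditioning on the event {(x,u) ∈ ACC}), let S be a finite set, and let s = s(x, t) be a function of (x, t) with values in S. Define d_comp := Σ_{s ∈ S, e} max_{w ∈ W} Σ_z | p_w(s, z, e | ACC) − (1/|S|) p_w(z, e | ACC) | and d′ := Σ_e p(e | ACC) max_{w ∈ W} Σ_{z,u} p_w(z, u | e, ACC) Σ_{s ∈ S} | p_w(s | z, u, e, ACC) − 1/|S| |. Then d_comp ≤ |S| · d′. -/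

import Mathlib

open Classical

noncomputable section

variable {W X Z U T E S : Type}

/-- probability of the acceptance event under `p w` -/
def pACC [Fintype X] [Fintype Z] [Fintype U] [Fintype T] [Fintype E]
    (p : W → X → Z → U → T → E → ℝ) (ACC : Finset (X × U)) (w : W) : ℝ :=
  ∑ x, ∑ z, ∑ u, ∑ t, ∑ e, if (x, u) ∈ ACC then p w x z u t e else 0

/-- `p_w(s, z, e | ACC)` where `s` is the value of the hash `sf(x,t)` -/
def pSZE [Fintype X] [Fintype Z] [Fintype U] [Fintype T] [Fintype E]
    (p : W → X → Z → U → T → E → ℝ) (ACC : Finset (X × U)) (sf : X → T → S)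
    (w : W) (s : S) (z : Z) (e : E) : ℝ :=
  (∑ x, ∑ u, ∑ t, if (x, u) ∈ ACC ∧ sf x t = s then p w x z u t e else 0) / pACC p ACC w

/-- `p_w(z, e | ACC)` -/
def pZE [Fintype X] [Fintype Z] [Fintype U] [Fintype T] [Fintype E]
    (p : W → X → Z → U → T → E → ℝ) (ACC : Finset (X × U))
    (w : W) (z : Z) (e : E) : ℝ :=
  (∑ x, ∑ u, ∑ t, if (x, u) ∈ ACC then p w x z u t e else 0) / pACC p ACC w

/-- `p_w(z, u | e, ACC)` -/
def pZUcondE [Fintype X] [Fintype Z] [Fintype U] [Fintype T] [Fintype E]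
    (p : W → X → Z → U → T → E → ℝ) (ACC : Finset (X × U))
    (w : W) (z : Z) (u : U) (e : E) : ℝ :=
  (∑ x, ∑ t, if (x, u) ∈ ACC then p w x z u t e else 0)
    / (∑ x, ∑ z', ∑ u', ∑ t, if (x, u') ∈ ACC then p w x z' u' t e else 0)

/-- `p_w(s | z, u, e, ACC)` -/
def pScond [Fintype X] [Fintype Z] [Fintype U] [Fintype T] [Fintype E]
    (p : W → X → Z → U → T → E → ℝ) (ACC : Finset (X × U)) (sf : X → T → S)
    (w : W) (s : S) (z : Z) (u : U) (e : E) : ℝ :=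
  (∑ x, ∑ t, if (x, u) ∈ ACC ∧ sf x t = s then p w x z u t e else 0)
    / (∑ x, ∑ t, if (x, u) ∈ ACC then p w x z u t e else 0)

/-- `p(e | ACC)`, computed from `p w` (by the marginal hypothesis it does not depend
on `w`) -/
def pEcond [Fintype X] [Fintype Z] [Fintype U] [Fintype T] [Fintype E]
    (p : W → X → Z → U → T → E → ℝ) (ACC : Finset (X × U)) (w : W) (e : E) : ℝ :=
  (∑ x, ∑ z, ∑ u, ∑ t, if (x, u) ∈ ACC then p w x z u t e else 0) / pACC p ACC w

section Stmt7Aux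
set_option linter.unusedSectionVars false

variable {W X Z U T E S : Type}
variable [Fintype X] [Fintype Z] [Fintype U] [Fintype T] [Fintype E] [Fintype S]

/-- joint weight of (s,z,u,e) inside ACC -/
def nA (p : W → X → Z → U → T → E → ℝ) (ACC : Finset (X × U)) (sf : X → T → S)
    (w : W) (s : S) (z : Z) (u : U) (e : E) : ℝ :=
  ∑ x, ∑ t, if (x, u) ∈ ACC ∧ sf x t = s then p w x z u t e else 0

/-- joint weight of (z,u,e) inside ACC -/
def nC (p : W → X → Z → U → T → E → ℝ) (ACC : Finset (X × U))
    (w : W) (z : Z) (u : U) (e : E) : ℝ :=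
  ∑ x, ∑ t, if (x, u) ∈ ACC then p w x z u t e else 0

/-- joint weight of e inside ACC -/
def nD (p : W → X → Z → U → T → E → ℝ) (ACC : Finset (X × U))
    (w : W) (e : E) : ℝ :=
  ∑ x, ∑ z, ∑ u, ∑ t, if (x, u) ∈ ACC then p w x z u t e else 0

lemma nA_nonneg (p : W → X → Z → U → T → E → ℝ) (hp0 : ∀ w x z u t e, 0 ≤ p w x z u t e)
    (ACC : Finset (X × U)) (sf : X → T → S) (w : W) (s : S) (z : Z) (u : U) (e : E) :
    0 ≤ nA p ACC sf w s z u e := by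
  refine Finset.sum_nonneg fun x _ => Finset.sum_nonneg fun t _ => ?_
  split_ifs <;> [exact hp0 w x z u t e; exact le_refl 0]

lemma nC_nonneg (p : W → X → Z → U → T → E → ℝ) (hp0 : ∀ w x z u t e, 0 ≤ p w x z u t e)
    (ACC : Finset (X × U)) (w : W) (z : Z) (u : U) (e : E) :
    0 ≤ nC p ACC w z u e := by
  refine Finset.sum_nonneg fun x _ => Finset.sum_nonneg fun t _ => ?_
  split_ifs <;> [exact hp0 w x z u t e; exact le_refl 0]

lemma nA_le_nC (p : W → X → Z → U → T → E → ℝ) (hp0 : ∀ w x z u t e, 0 ≤ p w x z u t e)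
    (ACC : Finset (X × U)) (sf : X → T → S) (w : W) (s : S) (z : Z) (u : U) (e : E) :
    nA p ACC sf w s z u e ≤ nC p ACC w z u e := by
  refine Finset.sum_le_sum fun x _ => Finset.sum_le_sum fun t _ => ?_
  by_cases h : (x, u) ∈ ACC
  · by_cases h' : sf x t = s <;> simp [h, h', hp0 w x z u t e]
  · simp [h]

lemma sum_nA (p : W → X → Z → U → T → E → ℝ) (ACC : Finset (X × U)) (sf : X → T → S)
    (w : W) (z : Z) (u : U) (e : E) :
    ∑ s, nA p ACC sf w s z u e = nC p ACC w z u e := by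
  unfold nA nC
  rw [Finset.sum_comm]
  refine Finset.sum_congr rfl fun x _ => ?_
  rw [Finset.sum_comm]
  refine Finset.sum_congr rfl fun t _ => ?_
  by_cases h : (x, u) ∈ ACC <;> simp [h]

lemma pSZE_eq (p : W → X → Z → U → T → E → ℝ) (ACC : Finset (X × U)) (sf : X → T → S)
    (w : W) (s : S) (z : Z) (e : E) :
    pSZE p ACC sf w s z e = (∑ u, nA p ACC sf w s z u e) / pACC p ACC w := by
  unfold pSZE nA
  rw [Finset.sum_comm]

lemma pZE_eq (p : W → X → Z → U → T → E → ℝ) (ACC : Finset (X × U))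
    (w : W) (z : Z) (e : E) :
    pZE p ACC w z e = (∑ u, nC p ACC w z u e) / pACC p ACC w := by
  unfold pZE nC
  rw [Finset.sum_comm]

lemma nD_eq_sum_nC (p : W → X → Z → U → T → E → ℝ) (ACC : Finset (X × U))
    (w : W) (e : E) :
    nD p ACC w e = ∑ z, ∑ u, nC p ACC w z u e := by
  unfold nD nC
  rw [Finset.sum_comm]
  exact Finset.sum_congr rfl fun z _ => Finset.sum_comm

lemma pZUcondE_eq (p : W → X → Z → U → T → E → ℝ) (ACC : Finset (X × U))
    (w : W) (z : Z) (u : U) (e : E) :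
    pZUcondE p ACC w z u e = nC p ACC w z u e / nD p ACC w e := rfl

lemma pScond_eq (p : W → X → Z → U → T → E → ℝ) (ACC : Finset (X × U)) (sf : X → T → S)
    (w : W) (s : S) (z : Z) (u : U) (e : E) :
    pScond p ACC sf w s z u e = nA p ACC sf w s z u e / nC p ACC w z u e := rfl

lemma pEcond_eq (p : W → X → Z → U → T → E → ℝ) (ACC : Finset (X × U)) (w : W) (e : E) :
    pEcond p ACC w e = nD p ACC w e / pACC p ACC w := rfl

lemma nD_pull (p : W → X → Z → U → T → E → ℝ) (ACC : Finset (X × U)) (w : W) (e : E) :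
    nD p ACC w e
      = ∑ x, ∑ u, if (x, u) ∈ ACC then ∑ z, ∑ t, p w x z u t e else 0 := by
  unfold nD
  refine Finset.sum_congr rfl fun x _ => ?_
  rw [Finset.sum_comm]
  refine Finset.sum_congr rfl fun u _ => ?_
  split_ifs with h <;> simp [h]

lemma nD_const (p : W → X → Z → U → T → E → ℝ)
    (hmarg : ∀ w w' x u e, (∑ z, ∑ t, p w x z u t e) = (∑ z, ∑ t, p w' x z u t e))
    (ACC : Finset (X × U)) (w w' : W) (e : E) :
    nD p ACC w e = nD p ACC w' e := by
  rw [nD_pull, nD_pull]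
  refine Finset.sum_congr rfl fun x _ => Finset.sum_congr rfl fun u _ => ?_
  split_ifs with h
  · exact hmarg w w' x u e
  · rfl

lemma pACC_eq_sum_nD (p : W → X → Z → U → T → E → ℝ) (ACC : Finset (X × U)) (w : W) :
    pACC p ACC w = ∑ e, nD p ACC w e := by
  have h1 : pACC p ACC w
      = ∑ x, ∑ u, if (x, u) ∈ ACC then ∑ z, ∑ t, ∑ e, p w x z u t e else 0 := by
    unfold pACC
    refine Finset.sum_congr rfl fun x _ => ?_
    rw [Finset.sum_comm]
    refine Finset.sum_congr rfl fun u _ => ?_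
    split_ifs with h <;> simp [h]
  have h2 : ∀ x u, (∑ z, ∑ t, ∑ e, p w x z u t e) = ∑ e, ∑ z, ∑ t, p w x z u t e := by
    intro x u
    rw [show (∑ z, ∑ t, ∑ e, p w x z u t e) = ∑ z, ∑ e, ∑ t, p w x z u t e from
      Finset.sum_congr rfl fun z _ => Finset.sum_comm, Finset.sum_comm]
  rw [h1]
  calc (∑ x, ∑ u, if (x, u) ∈ ACC then ∑ z, ∑ t, ∑ e, p w x z u t e else 0)
      = ∑ x, ∑ u, ∑ e, if (x, u) ∈ ACC then ∑ z, ∑ t, p w x z u t e else 0 := by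
        refine Finset.sum_congr rfl fun x _ => Finset.sum_congr rfl fun u _ => ?_
        split_ifs with h
        · exact h2 x u
        · simp
    _ = ∑ x, ∑ e, ∑ u, if (x, u) ∈ ACC then ∑ z, ∑ t, p w x z u t e else 0 :=
        Finset.sum_congr rfl fun x _ => Finset.sum_comm
    _ = ∑ e, ∑ x, ∑ u, if (x, u) ∈ ACC then ∑ z, ∑ t, p w x z u t e else 0 :=
        Finset.sum_comm
    _ = ∑ e, nD p ACC w e := Finset.sum_congr rfl fun e _ => (nD_pull p ACC w e).symm

lemma pACC_const (p : W → X → Z → U → T → E → ℝ)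
    (hmarg : ∀ w w' x u e, (∑ z, ∑ t, p w x z u t e) = (∑ z, ∑ t, p w' x z u t e))
    (ACC : Finset (X × U)) (w w' : W) :
    pACC p ACC w = pACC p ACC w' := by
  rw [pACC_eq_sum_nD, pACC_eq_sum_nD]
  exact Finset.sum_congr rfl fun e _ => nD_const p hmarg ACC w w' e

end Stmt7Aux

/-- `d_comp ≤ |S| · d′`. -/
theorem stmt_7 [Fintype W] [Nonempty W] [Fintype X] [Fintype Z] [Fintype U] [Fintype T]
    [Fintype E] [Fintype S]
    (p : W → X → Z → U → T → E → ℝ)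
    (hp0 : ∀ w x z u t e, 0 ≤ p w x z u t e)
    (hp1 : ∀ w, ∑ x, ∑ z, ∑ u, ∑ t, ∑ e, p w x z u t e = 1)
    -- the marginal `p_w(x,u,e)` does not depend on `w`
    (hmarg : ∀ w w' x u e, (∑ z, ∑ t, p w x z u t e) = (∑ z, ∑ t, p w' x z u t e))
    (ACC : Finset (X × U))
    (hACC : ∀ w, 0 < pACC p ACC w)
    (w₀ : W)
    (sf : X → T → S) :
    (∑ s : S, ∑ e : E,
        Finset.univ.sup' Finset.univ_nonempty (fun w : W =>
          ∑ z : Z, |pSZE p ACC sf w s z e - (1 / (Fintype.card S : ℝ)) * pZE p ACC w z e|))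
      ≤ (Fintype.card S : ℝ) *
        (∑ e : E, pEcond p ACC w₀ e *
          Finset.univ.sup' Finset.univ_nonempty (fun w : W =>
            ∑ z : Z, ∑ u : U, pZUcondE p ACC w z u e *
              ∑ s : S, |pScond p ACC sf w s z u e - 1 / (Fintype.card S : ℝ)|)) := by
  classical
  rcases isEmpty_or_nonempty S with hS | hS
  · -- S is empty: both sides vanish
    simp only [Finset.univ_eq_empty, Finset.sum_empty, mul_zero, Finset.sum_const_zero,
      Finset.sup'_const]
    exact le_refl 0
  have hK : (0:ℝ) < (Fintype.card S : ℝ) := by exact_mod_cast Fintype.card_pos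
  have hPc : ∀ w, pACC p ACC w = pACC p ACC w₀ := fun w => pACC_const p hmarg ACC w w₀
  have hP : (0:ℝ) < pACC p ACC w₀ := hACC w₀
  have hDc : ∀ w e, nD p ACC w e = nD p ACC w₀ e := fun w e => nD_const p hmarg ACC w w₀ e
  set K : ℝ := (Fintype.card S : ℝ) with hKdef
  set P : ℝ := pACC p ACC w₀ with hPdef
  -- core identity 1
  have core1 : ∀ (w : W) (z : Z) (u : U) (e : E),
      pZUcondE p ACC w z u e * ∑ s, |pScond p ACC sf w s z u e - 1 / K|
        = (∑ s, |nA p ACC sf w s z u e - nC p ACC w z u e / K|) / nD p ACC w e := by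
    intro w z u e
    rcases eq_or_lt_of_le (nC_nonneg p hp0 ACC w z u e) with hC | hC
    · have hA : ∀ s : S, nA p ACC sf w s z u e = 0 := fun s =>
        le_antisymm (hC ▸ nA_le_nC p hp0 ACC sf w s z u e) (nA_nonneg p hp0 ACC sf w s z u e)
      simp [pZUcondE_eq, pScond_eq, ← hC, hA]
    · have hCne : nC p ACC w z u e ≠ 0 := ne_of_gt hC
      have habs : ∀ s : S, |pScond p ACC sf w s z u e - 1 / K|
          = |nA p ACC sf w s z u e - nC p ACC w z u e / K| / nC p ACC w z u e := by
        intro s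
        rw [pScond_eq]
        rw [show nA p ACC sf w s z u e / nC p ACC w z u e - 1 / K
            = (nA p ACC sf w s z u e - nC p ACC w z u e / K) / nC p ACC w z u e from by
          field_simp
          try exact Or.inl (mul_comm _ _)]
        rw [abs_div, abs_of_pos hC]
      rw [pZUcondE_eq]
      rw [Finset.sum_congr rfl fun s _ => habs s, ← Finset.sum_div]
      rw [show nC p ACC w z u e / nD p ACC w e
            * ((∑ s, |nA p ACC sf w s z u e - nC p ACC w z u e / K|) / nC p ACC w z u e)
          = nC p ACC w z u e / nC p ACC w z u e
            * ((∑ s, |nA p ACC sf w s z u e - nC p ACC w z u e / K|) / nD p ACC w e) from by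
        ring]
      rw [div_self hCne, one_mul]
  -- core identity 2
  have core2 : ∀ (w : W) (e : E),
      pEcond p ACC w₀ e * (∑ z, ∑ u, pZUcondE p ACC w z u e *
          ∑ s, |pScond p ACC sf w s z u e - 1 / K|)
        = (∑ z, ∑ u, ∑ s, |nA p ACC sf w s z u e - nC p ACC w z u e / K|) / P := by
    intro w e
    simp only [core1]
    rw [show (∑ z, ∑ u, (∑ s, |nA p ACC sf w s z u e - nC p ACC w z u e / K|) / nD p ACC w e)
        = (∑ z, ∑ u, ∑ s, |nA p ACC sf w s z u e - nC p ACC w z u e / K|) / nD p ACC w e from by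
      simp only [← Finset.sum_div]]
    rw [pEcond_eq, hDc w e]
    rcases eq_or_ne (nD p ACC w₀ e) 0 with hD | hD
    · have hCz : ∀ z u, nC p ACC w z u e = 0 := by
        have h0 : (∑ z, ∑ u, nC p ACC w z u e) = 0 := by
          rw [← nD_eq_sum_nC, hDc w e, hD]
        intro z u
        have h1 := (Finset.sum_eq_zero_iff_of_nonneg
          (fun z _ => Finset.sum_nonneg fun u _ => nC_nonneg p hp0 ACC w z u e)).mp h0 z
          (Finset.mem_univ z)
        exact (Finset.sum_eq_zero_iff_of_nonneg
          (fun u _ => nC_nonneg p hp0 ACC w z u e)).mp h1 u (Finset.mem_univ u)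
      have hAz : ∀ s z u, nA p ACC sf w s z u e = 0 := fun s z u =>
        le_antisymm ((hCz z u) ▸ nA_le_nC p hp0 ACC sf w s z u e)
          (nA_nonneg p hp0 ACC sf w s z u e)
      simp [hD, hAz, hCz]
    · rw [show nD p ACC w₀ e / P
          * ((∑ z, ∑ u, ∑ s, |nA p ACC sf w s z u e - nC p ACC w z u e / K|) / nD p ACC w₀ e)
        = nD p ACC w₀ e / nD p ACC w₀ e
          * ((∑ z, ∑ u, ∑ s, |nA p ACC sf w s z u e - nC p ACC w z u e / K|) / P) from by ring]
      rw [div_self hD, one_mul]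
  -- pointwise bound
  have hg : ∀ (s : S) (e : E) (w : W),
      (∑ z, |pSZE p ACC sf w s z e - 1 / K * pZE p ACC w z e|)
        ≤ (∑ z, ∑ u, ∑ s', |nA p ACC sf w s' z u e - nC p ACC w z u e / K|) / P := by
    intro s e w
    rw [Finset.sum_div]
    refine Finset.sum_le_sum fun z _ => ?_
    rw [pSZE_eq, pZE_eq, hPc w]
    rw [show (∑ u, nA p ACC sf w s z u e) / P - 1 / K * ((∑ u, nC p ACC w z u e) / P)
        = (∑ u, (nA p ACC sf w s z u e - nC p ACC w z u e / K)) / P from by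
      rw [Finset.sum_sub_distrib, ← Finset.sum_div (f := fun u => nC p ACC w z u e)]
      field_simp]
    rw [abs_div, abs_of_pos hP]
    gcongr
    calc |∑ u, (nA p ACC sf w s z u e - nC p ACC w z u e / K)|
        ≤ ∑ u, |nA p ACC sf w s z u e - nC p ACC w z u e / K| :=
          Finset.abs_sum_le_sum_abs _ _
      _ ≤ ∑ u, ∑ s', |nA p ACC sf w s' z u e - nC p ACC w z u e / K| :=
          Finset.sum_le_sum fun u _ => Finset.single_le_sum
            (f := fun s' => |nA p ACC sf w s' z u e - nC p ACC w z u e / K|)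
            (fun s' _ => abs_nonneg _) (Finset.mem_univ s)
  have hpE : ∀ e : E, 0 ≤ pEcond p ACC w₀ e := by
    intro e
    rw [pEcond_eq]
    refine div_nonneg ?_ (le_of_lt hP)
    refine Finset.sum_nonneg fun x _ => Finset.sum_nonneg fun z _ =>
      Finset.sum_nonneg fun u _ => Finset.sum_nonneg fun t _ => ?_
    split_ifs <;> [exact hp0 w₀ x z u t e; exact le_refl 0]
  -- assemble
  rw [Finset.sum_comm, Finset.mul_sum]
  refine Finset.sum_le_sum fun e _ => ?_
  have hsup : ∀ s : S,
      (Finset.univ.sup' Finset.univ_nonempty (fun w : W =>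
        ∑ z, |pSZE p ACC sf w s z e - 1 / K * pZE p ACC w z e|))
      ≤ pEcond p ACC w₀ e * Finset.univ.sup' Finset.univ_nonempty (fun w : W =>
          ∑ z, ∑ u, pZUcondE p ACC w z u e *
            ∑ s, |pScond p ACC sf w s z u e - 1 / K|) := by
    intro s
    refine Finset.sup'_le _ _ fun w _ => ?_
    calc (∑ z, |pSZE p ACC sf w s z e - 1 / K * pZE p ACC w z e|)
        ≤ (∑ z, ∑ u, ∑ s', |nA p ACC sf w s' z u e - nC p ACC w z u e / K|) / P := hg s e w
      _ = pEcond p ACC w₀ e * (∑ z, ∑ u, pZUcondE p ACC w z u e *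
            ∑ s, |pScond p ACC sf w s z u e - 1 / K|) := (core2 w e).symm
      _ ≤ pEcond p ACC w₀ e * Finset.univ.sup' Finset.univ_nonempty (fun w : W =>
            ∑ z, ∑ u, pZUcondE p ACC w z u e *
              ∑ s, |pScond p ACC sf w s z u e - 1 / K|) :=
          mul_le_mul_of_nonneg_left (Finset.le_sup' (fun w : W =>
            ∑ z, ∑ u, pZUcondE p ACC w z u e *
              ∑ s, |pScond p ACC sf w s z u e - 1 / K|) (Finset.mem_univ w)) (hpE e)
  calc (∑ s : S, Finset.univ.sup' Finset.univ_nonempty (fun w : W =>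
          ∑ z, |pSZE p ACC sf w s z e - 1 / K * pZE p ACC w z e|))
      ≤ ∑ _s : S, pEcond p ACC w₀ e * Finset.univ.sup' Finset.univ_nonempty (fun w : W =>
          ∑ z, ∑ u, pZUcondE p ACC w z u e *
            ∑ s, |pScond p ACC sf w s z u e - 1 / K|) :=
        Finset.sum_le_sum fun s _ => hsup s
    _ = K * (pEcond p ACC w₀ e * Finset.univ.sup' Finset.univ_nonempty (fun w : W =>
          ∑ z, ∑ u, pZUcondE p ACC w z u e *
            ∑ s, |pScond p ACC sf w s z u e - 1 / K|)) := by
        rw [Finset.sum_const, Finset.card_univ, nsmul_eq_mul]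


end
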